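/- Let r be a power of an odd prime p, q = r², write q − 1 = e·f, and set R = (r+1)/gcd(r+1, f). Suppose t and f are such that t·f is even, 1 ≤ t ≤ R, and e is even. Then t·f belongs to Σ(g, q). -/

import Mathlib

open Finset

/-- Δ_S(a) = ∏_{b ∈ S, b ≠ a} (a − b). -/
def deltaS {F : Type*} [Field F] [DecidableEq F] (S : Finset F) (a : F) : F :=
  ∏ b ∈ S.erase a, (a - b)

/-- n ∈ Σ(g,q): n is even, n ≥ 2, and there is S ⊆ F_q with |S| = n such that
the quadratic-character values η_q(Δ_S(a)) agree for all a ∈ S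
(equivalently, the Δ_S(a) are all squares or all nonsquares). -/
def SigmaG (F : Type*) [Field F] [DecidableEq F] (n : ℕ) : Prop :=
  Even n ∧ 2 ≤ n ∧ ∃ S : Finset F, S.card = n ∧
    ((∀ a ∈ S, IsSquare (deltaS S a)) ∨ (∀ a ∈ S, ¬ IsSquare (deltaS S a)))

private lemma neg_one_pow_congr_mod2 {F : Type*} [Monoid F] [HasDistribNeg F] {a b : ℕ}
    (h : a % 2 = b % 2) : (-1 : F) ^ a = (-1) ^ b := by
  conv_lhs => rw [← Nat.div_add_mod a 2]
  conv_rhs => rw [← Nat.div_add_mod b 2]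
  rw [pow_add, pow_add, pow_mul, pow_mul, h]
  norm_num

private lemma sub_one_pow_eq {F : Type*} [Field F] {u : F} {r : ℕ} (hr : 1 ≤ r)
    (hu : u ^ (r + 1) = 1) (hu1 : u ≠ 1) (hfrob : (u - 1) ^ r = u ^ r - 1) :
    (u - 1) ^ (r - 1) = -(u ^ r) := by
  have hv : u - 1 ≠ 0 := sub_ne_zero.mpr hu1
  have h1 : (u - 1) ^ (r - 1) * (u - 1) = (u - 1) ^ r := by
    rw [← pow_succ]; congr 1; omega
  have key : (u - 1) ^ (r - 1) * u * (u - 1) = (-1) * (u - 1) := by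
    rw [mul_right_comm, h1, hfrob, sub_mul, one_mul, ← pow_succ, hu]; ring
  have h4 : (u - 1) ^ (r - 1) * u = -1 := mul_right_cancel₀ hv key
  have h5 : (u - 1) ^ (r - 1) * u ^ (r + 1) = -(u ^ r) := by
    rw [pow_succ', ← mul_assoc, h4, neg_one_mul]
  rwa [hu, mul_one] at h5

theorem stmt_10 (p m : ℕ) (hp : p.Prime) (hodd : p ≠ 2) (hm : 0 < m)
    (r : ℕ) (hr : r = p ^ m)
    (F : Type*) [Field F] [Fintype F] [DecidableEq F] (hF : Fintype.card F = r ^ 2)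
    (e f t : ℕ) (hef : r ^ 2 - 1 = e * f)
    (htf : Even (t * f)) (ht1 : 1 ≤ t) (ht2 : t ≤ (r + 1) / Nat.gcd (r + 1) f)
    (he : Even e) :
    SigmaG F (t * f) := by
  classical
  haveI : Fact p.Prime := ⟨hp⟩
  -- basic numerics
  have hpodd : Odd p := hp.odd_of_ne_two hodd
  have hrodd : Odd r := by rw [hr]; exact hpodd.pow
  have hp3 : 3 ≤ p := by obtain ⟨w, hw⟩ := hpodd; have := hp.two_le; omega
  have hr3 : 3 ≤ r := by
    have h1 : p ≤ p ^ m := Nat.le_self_pow hm.ne' p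
    omega
  obtain ⟨s, hs⟩ := hrodd
  have hs1 : 1 ≤ s := by omega
  obtain ⟨z, hz⟩ : ∃ z, s * s = z := ⟨_, rfl⟩
  have hz1 : 1 ≤ z := by rw [← hz]; exact Nat.one_le_iff_ne_zero.mpr (by positivity)
  have hrr : r ^ 2 = r * r := sq r
  have hss : r * r = 4 * z + 4 * s + 1 := by rw [hs, ← hz]; ring
  have hef' : r * r - 1 = e * f := by rw [← hrr]; exact hef
  set M : ℕ := 2 * z + 2 * s with hM
  have hefM : e * f = 2 * M := by omega
  have hMpos : 0 < M := by omega
  have hMeven : Even M := ⟨z + s, by omega⟩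
  have hMrr : M = (r - 1) * ((r + 1) / 2) := by
    rw [show r - 1 = 2 * s by omega, show (r + 1) / 2 = s + 1 by omega, hM, ← hz]; ring
  have heN : (r - 1) * (r + 1) = e * f := by
    have h1 : (r - 1) * (r + 1) = 4 * z + 4 * s := by
      rw [show r - 1 = 2 * s by omega, show r + 1 = 2 * s + 2 by omega, ← hz]; ring
    omega
  have hre : Even (r - 1) := ⟨s, by omega⟩
  have hef8 : 8 ≤ e * f := by omega
  have he0 : 0 < e := by
    rcases Nat.eq_zero_or_pos e with h | h
    · simp [h] at hef8
    · exact h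
  have hf0 : 0 < f := by
    rcases Nat.eq_zero_or_pos f with h | h
    · simp [h] at hef8
    · exact h
  haveI : NeZero f := ⟨hf0.ne'⟩
  -- characteristic
  have hchar : ringChar F = p := by
    haveI := ringChar.charP F
    obtain ⟨n, hnp, hn⟩ := FiniteField.card F (ringChar F)
    have hcard : Fintype.card F = p ^ (2 * m) := by rw [hF, hr, ← pow_mul, mul_comm]
    have hdvd : ringChar F ∣ p ^ (2 * m) := by
      rw [← hcard, hn]; exact dvd_pow_self _ (by positivity)
    exact (Nat.prime_dvd_prime_iff_eq hnp hp).mp (hnp.dvd_of_dvd_pow hdvd)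
  haveI hcp : CharP F p := hchar ▸ ringChar.charP F
  have hchar2 : ringChar F ≠ 2 := by rw [hchar]; exact hodd
  have hfrob : ∀ x y : F, (x - y) ^ r = x ^ r - y ^ r := by
    intro x y; rw [hr]; exact sub_pow_char_pow x y m
  -- generator
  obtain ⟨g, hg⟩ := IsCyclic.exists_generator (α := Fˣ)
  set G : F := (g : F) with hG
  have hogu : orderOf g = e * f := by
    rw [orderOf_eq_card_of_forall_mem_zpowers hg, Nat.card_eq_fintype_card,
      Fintype.card_units, hF, hrr, hef']
  have hogF : orderOf G = e * f := by rw [hG, orderOf_units, hogu]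
  have hG1 : G ^ (e * f) = 1 := by rw [← hogF]; exact pow_orderOf_eq_one G
  have hGM : G ^ M = -1 := by
    have h2 : G ^ M * G ^ M = 1 := by
      rw [← pow_add, show M + M = e * f by omega, hG1]
    rcases mul_self_eq_one_iff.mp h2 with h | h
    · exfalso
      have hdvd : orderOf G ∣ M := orderOf_dvd_of_pow_eq_one h
      rw [hogF] at hdvd
      have := Nat.le_of_dvd hMpos hdvd
      omega
    · exact h
  have hGpow : ∀ x : ℕ, (G ^ x) ^ M = (-1 : F) ^ x := by
    intro x; rw [← pow_mul, mul_comm, pow_mul, hGM]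
  have hGeq : ∀ {a b : ℕ}, a % (e * f) = b % (e * f) → G ^ a = G ^ b := by
    intro a b hab
    conv_lhs => rw [← pow_mod_orderOf]
    conv_rhs => rw [← pow_mod_orderOf]
    rw [hogF, hab]
  -- orders of powers
  have hoζu : orderOf (g ^ e) = f := by
    rw [orderOf_pow, hogu, Nat.gcd_comm, Nat.gcd_eq_left ⟨f, rfl⟩,
      Nat.mul_div_cancel_left f he0]
  have hoδu : orderOf (g ^ ((r - 1) * f)) = (r + 1) / Nat.gcd (r + 1) f := by
    rw [orderOf_pow, hogu, ← heN, Nat.gcd_mul_left,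
      Nat.mul_div_mul_left _ _ (by omega : 0 < r - 1)]
  have hoζF : orderOf (G ^ e) = f := by
    rw [hG, ← Units.val_pow_eq_pow_val, orderOf_units, hoζu]
  have hζprim : IsPrimitiveRoot (G ^ e) f := hoζF ▸ IsPrimitiveRoot.orderOf (G ^ e)
  -- the set S
  set φ : Fin t × Fin f → F := fun x => G ^ ((r - 1) * (x.1 : ℕ) + e * (x.2 : ℕ)) with hφ
  set d : ℕ → F := fun i => G ^ ((r - 1) * f * i) with hd
  have hφf : ∀ x : Fin t × Fin f, (φ x) ^ f = d (x.1 : ℕ) := by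
    intro x
    simp only [hφ, hd]
    rw [← pow_mul,
      show ((r - 1) * (x.1 : ℕ) + e * (x.2 : ℕ)) * f
        = (r - 1) * f * (x.1 : ℕ) + (e * f) * (x.2 : ℕ) by ring,
      pow_add, pow_mul G (e * f), hG1, one_pow, mul_one]
  have hinj : Function.Injective φ := by
    intro x y hxy
    have h2 : d (x.1 : ℕ) = d (y.1 : ℕ) := by rw [← hφf x, ← hφf y, hxy]
    simp only [hd] at h2
    have h1 : (g ^ ((r - 1) * f)) ^ (x.1 : ℕ) = (g ^ ((r - 1) * f)) ^ (y.1 : ℕ) := by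
      apply Units.ext
      push_cast
      rw [← hG, ← pow_mul, ← pow_mul]
      exact h2
    have hj : (x.1 : ℕ) = (y.1 : ℕ) := by
      refine pow_injOn_Iio_orderOf ?_ ?_ h1
      · rw [Set.mem_Iio, hoδu]; exact lt_of_lt_of_le x.1.isLt ht2
      · rw [Set.mem_Iio, hoδu]; exact lt_of_lt_of_le y.1.isLt ht2
    have hu : g ^ ((r - 1) * (x.1 : ℕ) + e * (x.2 : ℕ))
        = g ^ ((r - 1) * (x.1 : ℕ) + e * (y.2 : ℕ)) := by
      apply Units.ext
      push_cast
      rw [← hG]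
      have hxy' := hxy
      simp only [hφ] at hxy'
      rw [← hj] at hxy'
      exact hxy'
    have hmod := pow_eq_pow_iff_modEq.mp hu
    rw [hogu] at hmod
    have hmod2 : e * (x.2 : ℕ) ≡ e * (y.2 : ℕ) [MOD e * f] :=
      Nat.ModEq.add_left_cancel' _ hmod
    have hlt1 : e * (x.2 : ℕ) < e * f := mul_lt_mul_of_pos_left x.2.isLt he0
    have hlt2 : e * (y.2 : ℕ) < e * f := mul_lt_mul_of_pos_left y.2.isLt he0
    have heq : e * (x.2 : ℕ) = e * (y.2 : ℕ) := by
      have h3 := hmod2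
      unfold Nat.ModEq at h3
      rwa [Nat.mod_eq_of_lt hlt1, Nat.mod_eq_of_lt hlt2] at h3
    have hk : (x.2 : ℕ) = (y.2 : ℕ) := Nat.eq_of_mul_eq_mul_left he0 heq
    exact Prod.ext (Fin.ext hj) (Fin.ext hk)
  -- the constants
  set P : F := ∏ l ∈ (univ : Finset (Fin f)).erase 0, (1 - (G ^ e) ^ (l : ℕ)) with hP
  set T0 : ℕ := ∑ i : Fin t, (i : ℕ) with hT0
  set V : F := P ^ M * ((-1 : F) ^ ((r + 1) / 2)) ^ (t - 1) * (-1 : F) ^ (f * T0) with hV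
  -- difference character
  have hdlt : ∀ i j : ℕ, i < j → j < t →
      (d j - d i) ^ M = (-1 : F) ^ ((r + 1) / 2) * (-1 : F) ^ (f * (i + j)) := by
    intro i j hij hjt
    obtain ⟨u, hu⟩ : ∃ u : F, u = G ^ ((r - 1) * f * (j - i)) := ⟨_, rfl⟩
    have hdji : d j = d i * u := by
      simp only [hd, hu]
      rw [← pow_add, ← Nat.mul_add ((r - 1) * f), show i + (j - i) = j by omega]
    have hune : u ≠ 1 := by
      intro hcon
      have h1 : (g ^ ((r - 1) * f)) ^ (j - i) = 1 := by
        apply Units.ext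
        push_cast
        rw [← hG, ← pow_mul]
        rw [hu] at hcon
        exact hcon
      have h2 := orderOf_dvd_of_pow_eq_one h1
      rw [hoδu] at h2
      have h3 := Nat.le_of_dvd (by omega) h2
      omega
    have hur : u ^ (r + 1) = 1 := by
      rw [hu, ← pow_mul,
        show (r - 1) * f * (j - i) * (r + 1) = (e * f) * (f * (j - i)) by rw [← heN]; ring,
        pow_mul, hG1, one_pow]
    have hu1 : (u - 1) ^ (r - 1) = -(u ^ r) := by
      apply sub_one_pow_eq (by omega) hur hune
      have h := hfrob u 1
      rwa [one_pow] at h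
    have hdiM : (d i) ^ M = 1 := by
      simp only [hd]
      rw [hGpow]
      exact Even.neg_one_pow ((hre.mul_right f).mul_right i)
    have hvM : (u - 1) ^ M = (-1 : F) ^ ((r + 1) / 2) * (-1 : F) ^ (f * (i + j)) := by
      rw [hMrr, pow_mul, hu1, neg_pow]
      congr 1
      rw [hu, ← pow_mul, ← pow_mul,
        show (r - 1) * f * (j - i) * (r * ((r + 1) / 2))
          = ((r - 1) * ((r + 1) / 2)) * (f * (j - i) * r) by ring,
        ← hMrr, pow_mul, hGM]
      apply neg_one_pow_congr_mod2
      have e1 : f * (i + j) = f * (j - i) + 2 * (f * i) := by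
        rw [show i + j = (j - i) + 2 * i by omega, Nat.mul_add]; ring
      have e2 : f * (j - i) * r = f * (j - i) + 2 * (f * (j - i) * s) := by
        rw [hs]; ring
      omega
    rw [show d j - d i = d i * (u - 1) by rw [hdji]; ring, mul_pow, hdiM, one_mul, hvM]
  have hdne : ∀ i j : ℕ, i < t → j < t → i ≠ j →
      (d j - d i) ^ M = (-1 : F) ^ ((r + 1) / 2) * (-1 : F) ^ (f * (i + j)) := by
    intro i j hit hjt hne
    rcases Nat.lt_or_ge i j with h | h
    · exact hdlt i j h hjt
    · have h' : j < i := by omega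
      have hsw : d j - d i = -1 * (d i - d j) := by ring
      rw [hsw, mul_pow, hMeven.neg_one_pow, one_mul, hdlt j i h' hit, Nat.add_comm j i]
  -- main per-element computation
  have hfact : ∀ jk : Fin t × Fin f, (deltaS (univ.image φ) (φ jk)) ^ M = V := by
    rintro ⟨j, k⟩
    have haM : (φ (j, k)) ^ M = 1 := by
      simp only [hφ]
      rw [hGpow]
      exact Even.neg_one_pow (Even.add (hre.mul_right _) (he.mul_right _))
    have hstep1 : deltaS (univ.image φ) (φ (j, k))
        = ∏ x ∈ (univ : Finset (Fin t × Fin f)).erase (j, k), (φ (j, k) - φ x) := by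
      simp only [deltaS]
      rw [← Finset.image_erase hinj, Finset.prod_image (fun a _ b _ h => hinj h)]
    have hsplit : (univ : Finset (Fin t × Fin f)).erase (j, k)
        = ({j} ×ˢ (univ.erase k)) ∪ ((univ.erase j) ×ˢ univ) := by
      ext x
      simp only [mem_erase, mem_union, mem_product, mem_singleton, mem_univ, and_true,
        true_and, ne_eq, Prod.ext_iff]
      tauto
    have hdisj : Disjoint ({j} ×ˢ (univ.erase k)) ((univ.erase j) ×ˢ (univ : Finset (Fin f))) := by
      rw [Finset.disjoint_left]
      rintro ⟨a, b⟩ h1 h2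
      simp only [mem_product, mem_singleton, mem_erase, mem_univ, and_true, true_and,
        ne_eq] at h1 h2
      tauto
    have hownfac : ∀ l : Fin f, φ (j, l) = φ (j, k) * (G ^ e) ^ ((l - k : Fin f) : ℕ) := by
      intro l
      simp only [hφ]
      rw [← pow_mul, ← pow_add]
      apply hGeq
      have h1 : k + (l - k) = l := by rw [add_comm, sub_add_cancel]
      have hval : ((k : ℕ) + ((l - k : Fin f) : ℕ)) % f = (l : ℕ) := by
        rw [← Fin.val_add, h1]
      have hmodf : ((k : ℕ) + ((l - k : Fin f) : ℕ)) ≡ (l : ℕ) [MOD f] := by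
        unfold Nat.ModEq
        rw [hval, Nat.mod_eq_of_lt l.isLt]
      have hmain : (r - 1) * (j : ℕ) + e * (l : ℕ)
          ≡ (r - 1) * (j : ℕ) + e * (k : ℕ) + e * ((l - k : Fin f) : ℕ) [MOD e * f] := by
        rw [add_assoc, ← Nat.mul_add]
        exact Nat.ModEq.add_left _ (Nat.ModEq.mul_left' (c := e) hmodf.symm)
      exact hmain
    have hown : ∏ l ∈ (univ : Finset (Fin f)).erase k, (φ (j, k) - φ (j, l))
        = (φ (j, k)) ^ (f - 1) * P := by
      have hcongr : ∀ l ∈ (univ : Finset (Fin f)).erase k,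
          φ (j, k) - φ (j, l) = φ (j, k) * (1 - (G ^ e) ^ ((l - k : Fin f) : ℕ)) := by
        intro l _
        rw [hownfac l]; ring
      rw [Finset.prod_congr rfl hcongr, Finset.prod_mul_distrib, Finset.prod_const,
        card_erase_of_mem (mem_univ k), card_univ, Fintype.card_fin]
      congr 1
      rw [hP]
      refine Finset.prod_nbij' (fun l => l - k) (fun n => n + k) ?_ ?_ ?_ ?_ ?_
      · intro a ha
        simp only [mem_erase, mem_univ, and_true, ne_eq] at ha ⊢
        intro hc
        apply ha
        rwa [sub_eq_zero] at hc
      · intro a ha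
        simp only [mem_erase, mem_univ, and_true, ne_eq] at ha ⊢
        intro hc
        apply ha
        rwa [add_eq_right] at hc
      · intro a _
        exact sub_add_cancel a k
      · intro a _
        exact add_sub_cancel_right a k
      · intro a _
        rfl
    have hcross : ∀ i : Fin t, ∏ l : Fin f, (φ (j, k) - φ (i, l)) = d (j : ℕ) - d (i : ℕ) := by
      intro i
      have hXp := X_pow_sub_C_eq_prod hζprim hf0
        (rfl : (G ^ ((r - 1) * (i : ℕ))) ^ f = (G ^ ((r - 1) * (i : ℕ))) ^ f)
      have heval := congrArg (Polynomial.eval (φ (j, k))) hXp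
      simp only [Polynomial.eval_sub, Polynomial.eval_pow, Polynomial.eval_X,
        Polynomial.eval_C, Polynomial.eval_prod] at heval
      have hfac : ∀ l : Fin f, φ (i, l) = (G ^ e) ^ (l : ℕ) * G ^ ((r - 1) * (i : ℕ)) := by
        intro l
        simp only [hφ]
        rw [← pow_mul, ← pow_add, Nat.add_comm]
      calc ∏ l : Fin f, (φ (j, k) - φ (i, l))
          = ∏ l : Fin f,
              (fun n : ℕ => φ (j, k) - (G ^ e) ^ n * G ^ ((r - 1) * (i : ℕ))) (l : ℕ) :=
            Finset.prod_congr rfl (fun l _ => by rw [hfac l])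
        _ = ∏ n ∈ Finset.range f, (φ (j, k) - (G ^ e) ^ n * G ^ ((r - 1) * (i : ℕ))) :=
            Fin.prod_univ_eq_prod_range
              (fun n : ℕ => φ (j, k) - (G ^ e) ^ n * G ^ ((r - 1) * (i : ℕ))) f
        _ = (φ (j, k)) ^ f - (G ^ ((r - 1) * (i : ℕ))) ^ f := heval.symm
        _ = d (j : ℕ) - d (i : ℕ) := by
            rw [hφf (j, k)]
            simp only [hd]
            rw [← pow_mul, show (r - 1) * (i : ℕ) * f = (r - 1) * f * (i : ℕ) by ring]
    have hdecomp : deltaS (univ.image φ) (φ (j, k))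
        = ((φ (j, k)) ^ (f - 1) * P) * ∏ i ∈ (univ : Finset (Fin t)).erase j,
            (d (j : ℕ) - d (i : ℕ)) := by
      rw [hstep1, hsplit, Finset.prod_union hdisj, Finset.prod_product, Finset.prod_product,
        Finset.prod_singleton, hown]
      congr 1
      exact Finset.prod_congr rfl fun i _ => hcross i
    have hprodM : ∏ i ∈ (univ : Finset (Fin t)).erase j, (d (j : ℕ) - d (i : ℕ)) ^ M
        = ((-1 : F) ^ ((r + 1) / 2)) ^ (t - 1) * (-1 : F) ^ (f * T0) := by
      have hcongr : ∀ i ∈ (univ : Finset (Fin t)).erase j,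
          (d (j : ℕ) - d (i : ℕ)) ^ M
            = (-1 : F) ^ ((r + 1) / 2) * (-1 : F) ^ (f * ((i : ℕ) + (j : ℕ))) := by
        intro i hi
        simp only [mem_erase, ne_eq] at hi
        exact hdne (i : ℕ) (j : ℕ) i.isLt j.isLt (fun hc => hi.1 (Fin.ext hc))
      rw [Finset.prod_congr rfl hcongr, Finset.prod_mul_distrib, Finset.prod_const,
        card_erase_of_mem (mem_univ j), card_univ, Fintype.card_fin,
        Finset.prod_pow_eq_pow_sum]
      congr 1
      apply neg_one_pow_congr_mod2
      have hsum : (∑ i ∈ (univ : Finset (Fin t)).erase j, f * ((i : ℕ) + (j : ℕ)))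
          + f * ((j : ℕ) + (j : ℕ)) = ∑ i : Fin t, f * ((i : ℕ) + (j : ℕ)) :=
        Finset.sum_erase_add (univ : Finset (Fin t)) _ (mem_univ j)
      have hsum2 : ∑ i : Fin t, f * ((i : ℕ) + (j : ℕ)) = f * T0 + t * (f * (j : ℕ)) := by
        simp only [Nat.mul_add]
        rw [Finset.sum_add_distrib, ← Finset.mul_sum, ← hT0, Finset.sum_const, card_univ,
          Fintype.card_fin, smul_eq_mul]
      obtain ⟨w, hw⟩ := htf
      have e2 : t * (f * (j : ℕ)) = 2 * (w * (j : ℕ)) := by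
        rw [← mul_assoc, hw]; ring
      have e1 : f * ((j : ℕ) + (j : ℕ)) = 2 * (f * (j : ℕ)) := by ring
      omega
    rw [hdecomp, mul_pow, mul_pow,
      ← Finset.prod_pow ((univ : Finset (Fin t)).erase j) M
        (fun i => d (j : ℕ) - d (i : ℕ)), hprodM,
      ← pow_mul, mul_comm (f - 1) M, pow_mul, haM, one_pow, one_mul, hV]
    ring
  -- conclusion
  refine ⟨htf, ?_, univ.image φ, ?_, ?_⟩
  · obtain ⟨w, hw⟩ := htf
    have h1 : 0 < t * f := Nat.mul_pos ht1 hf0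
    omega
  · rw [Finset.card_image_of_injective _ hinj, card_univ, Fintype.card_prod,
      Fintype.card_fin, Fintype.card_fin]
  · have hcard2 : Fintype.card F / 2 = M := by
      have h1 : Fintype.card F = 4 * z + 4 * s + 1 := by rw [hF, hrr, hss]
      omega
    have hne0 : ∀ a ∈ univ.image φ, deltaS (univ.image φ) a ≠ 0 := by
      intro a _
      simp only [deltaS]
      rw [Finset.prod_ne_zero_iff]
      intro b hb
      exact sub_ne_zero.mpr (Ne.symm (Finset.ne_of_mem_erase hb))
    by_cases hV1 : V = 1
    · refine Or.inl fun a ha => ?_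
      obtain ⟨jk, -, rfl⟩ := Finset.mem_image.mp ha
      rw [FiniteField.isSquare_iff hchar2 (hne0 _ ha), hcard2, hfact jk, hV1]
    · refine Or.inr fun a ha hsq => hV1 ?_
      obtain ⟨jk, -, rfl⟩ := Finset.mem_image.mp ha
      rw [← hfact jk, ← hcard2]
      exact (FiniteField.isSquare_iff hchar2 (hne0 _ ha)).mp hsq
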